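/- For all x ∈ (1, ∞), x^((1-γ)x - 1) < Γ(x) < x^(x-1). -/

import Mathlib

open Real Filter Set Topology

local notation "γ" => Real.eulerMascheroniConstant

lemma gamma_le_one_of_Icc {x : ℝ} (h1 : 1 ≤ x) (h2 : x ≤ 2) : Real.Gamma x ≤ 1 := by
  have hx0 : (0:ℝ) < x := by linarith
  have hconv : (Real.log ∘ Real.Gamma) ((2 - x) • (1:ℝ) + (x - 1) • 2) ≤
      (2 - x) • (Real.log ∘ Real.Gamma) 1 + (x - 1) • (Real.log ∘ Real.Gamma) 2 :=
    Real.convexOn_log_Gamma.2 (mem_Ioi.mpr one_pos) (mem_Ioi.mpr two_pos)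
      (by linarith) (by linarith) (by ring)
  simp only [smul_eq_mul, Function.comp_apply, Real.Gamma_one, Real.Gamma_two, Real.log_one,
    mul_zero, add_zero] at hconv
  rw [show (2 - x) * 1 + (x - 1) * 2 = x by ring] at hconv
  calc Real.Gamma x = Real.exp (Real.log (Real.Gamma x)) :=
        (Real.exp_log (Real.Gamma_pos_of_pos hx0)).symm
    _ ≤ Real.exp 0 := Real.exp_le_exp.mpr hconv
    _ = 1 := Real.exp_zero

lemma gamma_upper {x : ℝ} (hx : 1 < x) : Real.Gamma x < x ^ (x - 1) := by
  obtain ⟨n, hn⟩ := exists_nat_ge x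
  induction n generalizing x with
  | zero => exfalso; simp at hn; linarith
  | succ n ih =>
    rcases le_or_gt x 2 with h2 | h2
    · rcases eq_or_lt_of_le h2 with rfl | h2'
      · rw [Real.Gamma_two, show (2:ℝ) - 1 = 1 by norm_num, Real.rpow_one]
        norm_num
      · refine lt_of_le_of_lt (gamma_le_one_of_Icc hx.le h2'.le) ?_
        rw [Real.one_lt_rpow_iff_of_pos (by linarith)]
        left; exact ⟨hx, by linarith⟩
    · have hx1 : 1 < x - 1 := by linarith
      have hxn : x - 1 ≤ n := by
        have : x ≤ (n:ℝ) + 1 := by exact_mod_cast hn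
        linarith
      have hih := ih hx1 hxn
      have heq : Real.Gamma x = (x - 1) * Real.Gamma (x - 1) := by
        have := Real.Gamma_add_one (s := x - 1) (by linarith : (x:ℝ) - 1 ≠ 0)
        rwa [sub_add_cancel] at this
      rw [heq]
      calc (x - 1) * Real.Gamma (x - 1) < (x - 1) * (x - 1) ^ (x - 1 - 1) :=
            mul_lt_mul_of_pos_left hih (by linarith)
        _ = (x - 1) ^ (x - 1) := by
            rw [← Real.rpow_one_add' (by linarith) (by intro h; linarith [h])]
            ring_nf
        _ < x ^ (x - 1) := Real.rpow_lt_rpow (by linarith) (by linarith) (by linarith)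
lemma convexOn_Sn (M δ L A : ℝ) (hM : 1 < M) (hδ : 0 < δ) (n : ℕ)
    (hn : ∀ t ∈ Set.Icc (1:ℝ) M, (t + ↑n + 1)⁻¹ + 2 * δ + (1 - γ) * t⁻¹ ≤ (t + 1)⁻¹) :
    ConvexOn ℝ (Set.Icc 1 M) (fun t => t * L + A -
      (∑ m ∈ Finset.range n, Real.log (t + (↑m + 1))) - (1 - γ) * (t * Real.log t) - δ * t ^ 2) := by
  set f' : ℝ → ℝ := fun t => L - (∑ m ∈ Finset.range n, (t + (↑m + 1))⁻¹)
      - (1 - γ) * (Real.log t + 1) - δ * (2 * t) with hf'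
  set f'' : ℝ → ℝ := fun t => (∑ m ∈ Finset.range n, ((t + (↑m + 1)) ^ 2)⁻¹)
      - (1 - γ) * t⁻¹ - δ * 2 with hf''
  have hder : ∀ t : ℝ, 0 < t → HasDerivAt (fun t => t * L + A -
      (∑ m ∈ Finset.range n, Real.log (t + (↑m + 1))) - (1 - γ) * (t * Real.log t) - δ * t ^ 2)
      (f' t) t := by
    intro t ht
    have h1 : HasDerivAt (fun t : ℝ => t * L + A) L t := by
      simpa using ((hasDerivAt_id t).mul_const L).add_const A
    have hlog : ∀ m : ℕ, HasDerivAt (fun t : ℝ => Real.log (t + (↑m + 1)))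
        ((t + (↑m + 1))⁻¹) t := by
      intro m
      have : (0:ℝ) < t + (↑m + 1) := by positivity
      simpa [one_div] using ((hasDerivAt_id t).add_const ((m : ℝ) + 1)).log this.ne'
    have hsum : HasDerivAt (fun t : ℝ => ∑ m ∈ Finset.range n, Real.log (t + (↑m + 1)))
        (∑ m ∈ Finset.range n, (t + (↑m + 1))⁻¹) t :=
      HasDerivAt.fun_sum fun m _ => hlog m
    have hmul : HasDerivAt (fun t : ℝ => t * Real.log t) (Real.log t + 1) t := by
      have := (hasDerivAt_id t).mul (Real.hasDerivAt_log ht.ne')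
      exact this.congr_deriv (by simp [mul_inv_cancel₀ ht.ne'])
    have hsq : HasDerivAt (fun t : ℝ => δ * t ^ 2) (δ * (2 * t)) t := by
      simpa using (hasDerivAt_pow 2 t).const_mul δ
    exact ((h1.sub hsum).sub (hmul.const_mul (1 - γ))).sub hsq
  have hder2 : ∀ t : ℝ, 0 < t → HasDerivAt f' (f'' t) t := by
    intro t ht
    have hinv : ∀ m : ℕ, HasDerivAt (fun t : ℝ => (t + (↑m + 1))⁻¹)
        (-((t + (↑m + 1)) ^ 2)⁻¹) t := by
      intro m
      have : (0:ℝ) < t + (↑m + 1) := by positivity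
      exact (((hasDerivAt_id t).add_const ((m : ℝ) + 1)).inv this.ne').congr_deriv (by simp [one_div, neg_div])
    have hsum : HasDerivAt (fun t : ℝ => ∑ m ∈ Finset.range n, (t + (↑m + 1))⁻¹)
        (∑ m ∈ Finset.range n, -((t + (↑m + 1)) ^ 2)⁻¹) t :=
      HasDerivAt.fun_sum fun m _ => hinv m
    have hlog' : HasDerivAt (fun t : ℝ => (1 - γ) * (Real.log t + 1)) ((1 - γ) * t⁻¹) t :=
      ((Real.hasDerivAt_log ht.ne').add_const 1).const_mul (1 - γ)
    have hsq' : HasDerivAt (fun t : ℝ => δ * (2 * t)) (δ * 2) t := by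
      simpa using ((hasDerivAt_id t).const_mul 2).const_mul δ
    have := (((hasDerivAt_const t L).sub hsum).sub hlog').sub hsq'
    refine this.congr_deriv ?_
    simp only [hf'', Finset.sum_neg_distrib]
    ring
  refine convexOn_of_hasDerivWithinAt2_nonneg (f' := f') (f'' := f'') (convex_Icc 1 M) ?_ ?_ ?_ ?_
  · intro t ht
    exact (hder t (by linarith [ht.1])).continuousAt.continuousWithinAt
  · intro t ht
    rw [interior_Icc] at ht
    exact (hder t (by linarith [ht.1])).hasDerivWithinAt
  · intro t ht
    rw [interior_Icc] at ht
    exact (hder2 t (by linarith [ht.1])).hasDerivWithinAt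
  · intro t ht
    rw [interior_Icc] at ht
    have ht1 : (1:ℝ) < t := ht.1
    have ht0 : (0:ℝ) < t := by linarith
    have htM : t ≤ M := ht.2.le
    have key : (t + 1)⁻¹ - (t + ↑n + 1)⁻¹ ≤
        ∑ m ∈ Finset.range n, ((t + (↑m + 1)) ^ 2)⁻¹ := by
      have htel : ∑ m ∈ Finset.range n,
          ((t + ↑m + 1)⁻¹ - (t + ↑(m + 1) + 1)⁻¹) = (t + 1)⁻¹ - (t + ↑n + 1)⁻¹ := by
        rw [Finset.sum_range_sub' (f := fun m => (t + (m : ℝ) + 1)⁻¹) n]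
        norm_num
      rw [← htel]
      refine Finset.sum_le_sum fun m _ => ?_
      have hm1 : (0:ℝ) < t + ↑m + 1 := by positivity
      have hm2 : (0:ℝ) < t + ↑(m + 1) + 1 := by positivity
      have e1 : (t + ↑m + 1)⁻¹ - (t + ↑(m + 1) + 1)⁻¹
          = ((t + ↑m + 1) * (t + ↑(m + 1) + 1))⁻¹ := by
        rw [inv_sub_inv hm1.ne' hm2.ne']
        push_cast
        rw [show t + (↑m + 1) + 1 - (t + ↑m + 1) = 1 by ring, one_div]
      rw [e1]
      have h2 : (t + (↑m + 1)) ^ 2 ≤ (t + ↑m + 1) * (t + ↑(m + 1) + 1) := by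
        push_cast; nlinarith
      have h3 : (0:ℝ) < (t + (↑m + 1)) ^ 2 := by positivity
      exact inv_anti₀ h3 h2
    have hmain := hn t ⟨ht1.le, htM⟩
    simp only [hf'']
    linarith
lemma strictConvexOn_h (M : ℝ) (hM : 1 < M) :
    StrictConvexOn ℝ (Set.Icc 1 M)
      (fun t => Real.log (Real.Gamma t) - ((1 - γ) * t - 1) * Real.log t) := by
  have hγ1 := Real.one_half_lt_eulerMascheroniConstant
  have hγ2 := Real.eulerMascheroniConstant_lt_two_thirds
  set δ : ℝ := (2 * γ - 1) / (4 * M * (M + 1)) with hδdef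
  have hM0 : (0:ℝ) < M := by linarith
  have hδ : 0 < δ := div_pos (by linarith) (by positivity)
  obtain ⟨N, hN⟩ := exists_nat_ge ((2 * δ)⁻¹)
  have hcond : ∀ n : ℕ, N ≤ n → ∀ t ∈ Set.Icc (1:ℝ) M,
      (t + ↑n + 1)⁻¹ + 2 * δ + (1 - γ) * t⁻¹ ≤ (t + 1)⁻¹ := by
    intro n hn t ht
    obtain ⟨ht1, htM⟩ := ht
    have ht0 : (0:ℝ) < t := by linarith
    have h4δ : 4 * δ = (2 * γ - 1) / (M * (M + 1)) := by
      rw [hδdef]; field_simp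
    have ha : (2 * γ - 1) / (M * (M + 1)) ≤ (γ * t - (1 - γ)) / (t * (t + 1)) := by
      apply div_le_div₀ (by nlinarith) (by nlinarith) (by positivity) (by nlinarith)
    have hsub : (t + 1)⁻¹ - (1 - γ) * t⁻¹ = (γ * t - (1 - γ)) / (t * (t + 1)) := by
      field_simp
      ring
    have hb : (t + ↑n + 1)⁻¹ ≤ 2 * δ := by
      have h1 : (2 * δ)⁻¹ ≤ t + ↑n + 1 := by
        have : (N:ℝ) ≤ n := Nat.cast_le.mpr hn
        linarith
      have h2 : (t + ↑n + 1)⁻¹ ≤ ((2 * δ)⁻¹)⁻¹ := by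
        apply inv_anti₀ (by positivity) h1
      rwa [inv_inv] at h2
    linarith
  -- convexity of the δ-reduced function
  have hu : ConvexOn ℝ (Set.Icc 1 M)
      (fun t => Real.log (Real.Gamma t) - ((1 - γ) * t - 1) * Real.log t - δ * t ^ 2) := by
    refine ⟨convex_Icc _ _, ?_⟩
    intro p hp q hq a b ha hb hab
    have hr : a • p + b • q ∈ Set.Icc (1:ℝ) M := (convex_Icc 1 M) hp hq ha hb hab
    simp only [smul_eq_mul] at hr ⊢
    -- sequence values
    set S : ℝ → ℕ → ℝ := fun s n => s * Real.log n + Real.log (Nat.factorial n : ℝ) -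
      (∑ m ∈ Finset.range n, Real.log (s + (↑m + 1))) - (1 - γ) * (s * Real.log s) - δ * s ^ 2
      with hSdef
    have hSval : ∀ s : ℝ, 0 < s → ∀ n : ℕ,
        S s n = Real.BohrMollerup.logGammaSeq s n - ((1 - γ) * s - 1) * Real.log s - δ * s ^ 2 := by
      intro s hs n
      rw [hSdef]
      simp only [Real.BohrMollerup.logGammaSeq]
      rw [Finset.sum_range_succ' (fun m => Real.log (s + ↑m)) n]
      simp only [Nat.cast_zero, add_zero, Nat.cast_add, Nat.cast_one]
      ring
    have hlim : ∀ s : ℝ, s ∈ Set.Icc (1:ℝ) M → Tendsto (fun n => S s n) atTop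
        (𝓝 (Real.log (Real.Gamma s) - ((1 - γ) * s - 1) * Real.log s - δ * s ^ 2)) := by
      intro s hs
      have hs0 : (0:ℝ) < s := by linarith [hs.1]
      have h0 := (Real.BohrMollerup.tendsto_log_gamma hs0).sub_const
        (((1 - γ) * s - 1) * Real.log s + δ * s ^ 2)
      rw [show Real.log (Real.Gamma s) - (((1 - γ) * s - 1) * Real.log s + δ * s ^ 2)
        = Real.log (Real.Gamma s) - ((1 - γ) * s - 1) * Real.log s - δ * s ^ 2 by ring] at h0
      refine h0.congr fun n => ?_
      rw [hSval s hs0 n]; ring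
    have hineq : ∀ᶠ n in atTop, S (a * p + b * q) n ≤ a * S p n + b * S q n := by
      filter_upwards [eventually_ge_atTop N] with n hn
      have hc := (convexOn_Sn M δ (Real.log n) (Real.log (Nat.factorial n : ℝ)) hM hδ n (hcond n hn)).2
        hp hq ha hb hab
      simpa only [smul_eq_mul] using hc
    exact le_of_tendsto_of_tendsto (hlim _ hr)
      (((hlim p hp).const_mul a).add ((hlim q hq).const_mul b)) hineq
  -- strict convexity of the quadratic part
  have hsq : StrictConvexOn ℝ (Set.Icc (1:ℝ) M) (fun t : ℝ => δ * t ^ 2) := by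
    refine ⟨convex_Icc _ _, fun p _ q _ hpq a b ha hb hab => ?_⟩
    simp only [smul_eq_mul]
    have h1 : 0 < (p - q) ^ 2 :=
      lt_of_le_of_ne (sq_nonneg _) (Ne.symm (pow_ne_zero 2 (sub_ne_zero.mpr hpq)))
    have hb' : b = 1 - a := by linarith
    subst hb'
    nlinarith [mul_pos hδ (mul_pos (mul_pos ha hb) h1)]
  have := hu.add_strictConvexOn hsq
  refine this.congr fun t _ => ?_
  simp only [Pi.add_apply]
  ring
lemma h_pos {x : ℝ} (hx : 1 < x) :
    ((1 - γ) * x - 1) * Real.log x < Real.log (Real.Gamma x) := by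
  set F : ℝ → ℝ := fun t => Real.log (Real.Gamma t) - ((1 - γ) * t - 1) * Real.log t with hF
  have hs := strictConvexOn_h x hx
  have hF1 : F 1 = 0 := by simp [hF, Real.Gamma_one]
  have hd : HasDerivAt F 0 1 := by
    have h1 : HasDerivAt (fun t => Real.log (Real.Gamma t)) (-γ) 1 := by
      have := Real.hasDerivAt_Gamma_one.log (by rw [Real.Gamma_one]; norm_num)
      simpa [Real.Gamma_one] using this
    have h2 : HasDerivAt (fun t : ℝ => ((1 - γ) * t - 1) * Real.log t) (-γ) 1 := by
      have ha : HasDerivAt (fun t : ℝ => (1 - γ) * t - 1) (1 - γ) 1 := by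
        simpa using ((hasDerivAt_id (1:ℝ)).const_mul (1 - γ)).sub_const 1
      have hb := ha.mul (Real.hasDerivAt_log one_ne_zero)
      have : (1 - γ) * Real.log 1 + ((1 - γ) * 1 - 1) * 1⁻¹ = -γ := by
        simp
      rw [this] at hb
      exact hb
    have := h1.sub h2
    exact this.congr_deriv (sub_self _)
  set t : ℝ := (1 + x) / 2 with htdef
  have ht1 : 1 < t := by rw [htdef]; linarith
  have htx : t < x := by rw [htdef]; linarith
  have h1D : (1:ℝ) ∈ Set.Icc (1:ℝ) x := ⟨le_refl _, hx.le⟩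
  have htD : t ∈ Set.Icc (1:ℝ) x := ⟨ht1.le, htx.le⟩
  have hxD : x ∈ Set.Icc (1:ℝ) x := ⟨hx.le, le_refl _⟩
  have hslope0 : 0 ≤ (F t - F 1) / (t - 1) := by
    have htend : Tendsto (fun s => (F s - F 1) / (s - 1)) (𝓝[>] (1:ℝ)) (𝓝 0) := by
      have hds := hasDerivAt_iff_tendsto_slope.mp hd
      have hmono : (𝓝[>] (1:ℝ)) ≤ (𝓝[≠] (1:ℝ)) :=
        nhdsWithin_mono 1 (fun s hs => ne_of_gt hs)
      refine (hds.mono_left hmono).congr fun s => ?_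
      rw [slope_def_field]
    refine le_of_tendsto htend ?_
    filter_upwards [Ioo_mem_nhdsGT_of_mem (Set.left_mem_Ico.mpr ht1)] with s hsm
    have hsD : s ∈ Set.Icc (1:ℝ) x := ⟨hsm.1.le, hsm.2.le.trans htx.le⟩
    exact hs.convexOn.secant_mono h1D hsD htD (ne_of_gt hsm.1) (ne_of_gt ht1) hsm.2.le
  have h2 := hs.slope_strict_mono_adjacent h1D hxD ht1 htx
  have ht1' : 0 < t - 1 := by linarith
  have htx' : 0 < x - t := by linarith
  have e1 : 0 ≤ F t - F 1 := by
    have := mul_nonneg hslope0 ht1'.le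
    rwa [div_mul_cancel₀ _ ht1'.ne'] at this
  have e2 : 0 < F x - F t := by
    have hq : 0 < (F x - F t) / (x - t) := lt_of_le_of_lt hslope0 h2
    have := mul_pos hq htx'
    rwa [div_mul_cancel₀ _ htx'.ne'] at this
  have : 0 < F x := by rw [hF1] at e1; linarith
  rw [← sub_pos]
  exact this

theorem gamma_rpow_bounds (x : ℝ) (hx : 1 < x) :
    x ^ ((1 - Real.eulerMascheroniConstant) * x - 1) < Real.Gamma x ∧
    Real.Gamma x < x ^ (x - 1) := by
  refine ⟨?_, gamma_upper hx⟩
  have hx0 : (0:ℝ) < x := by linarith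
  have h := h_pos hx
  rw [Real.rpow_def_of_pos hx0, mul_comm]
  calc Real.exp (((1 - γ) * x - 1) * Real.log x) < Real.exp (Real.log (Real.Gamma x)) :=
        Real.exp_lt_exp.mpr h
    _ = Real.Gamma x := Real.exp_log (Real.Gamma_pos_of_pos hx0)
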